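/- Let G be a finite abelian p-group. Then V(Z_p G)^p = V(Z_p G^p), i.e., the subgroup of p-th powers of normalized units of Z_p G coincides with the group of normalized units supported on the subgroup G^p (under the Frobenius identification). Consequently, for each i ≥ 1 the number of cyclic direct factors of order p^i in a decomposition of V(Z_p G) equals |G^{p^{i−1}}| − 2|G^{p^i}| + |G^{p^{i+1}}|. -/

import Mathlib

/-- The augmentation map of a group ring. -/
noncomputable def aug (R G : Type*) [CommRing R] [CommGroup G] :
    MonoidAlgebra R G →ₐ[R] R := MonoidAlgebra.lift R R G 1

/-- The group of normalized units of a group ring. -/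
noncomputable def Vgrp (R G : Type*) [CommRing R] [CommGroup G] :
    Subgroup (MonoidAlgebra R G)ˣ :=
  MonoidHom.ker (Units.map ((aug R G).toRingHom : MonoidAlgebra R G →* R))

section Aux

variable {R : Type*} [CommRing R] {G : Type*} [CommGroup G]

lemma aug_apply (x : MonoidAlgebra R G) : aug R G x = x.coeff.sum fun _ a => a := by
  simp [aug, MonoidAlgebra.lift_apply]

lemma aug_apply_fintype [Fintype G] (x : MonoidAlgebra R G) :
    aug R G x = ∑ g : G, x.coeff g := by
  rw [aug_apply, Finsupp.sum_fintype]
  intro i; rfl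

lemma mem_Vgrp_iff (u : (MonoidAlgebra R G)ˣ) :
    u ∈ Vgrp R G ↔ aug R G (↑u) = 1 := by
  rw [Vgrp, MonoidHom.mem_ker, Units.ext_iff]
  simp

variable {p : ℕ} [hp : Fact p.Prime]

instance : CharP (MonoidAlgebra (ZMod p) G) p := by
  refine charP_of_injective_algebraMap (R := ZMod p) ?_ p
  intro a b hab
  have := congrArg (fun x => x.coeff 1) hab
  simpa [MonoidAlgebra.coe_algebraMap, MonoidAlgebra.coeff_single, Finsupp.single_apply] using this

lemma MA_mapDomain_id (x : MonoidAlgebra (ZMod p) G) :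
    MonoidAlgebra.mapDomain id x = x :=
  MonoidAlgebra.coeff_injective (Finsupp.mapDomain_id (v := x.coeff))

lemma MA_mapDomain_comp (f g : G → G) (x : MonoidAlgebra (ZMod p) G) :
    MonoidAlgebra.mapDomain (f ∘ g) x = MonoidAlgebra.mapDomain f (MonoidAlgebra.mapDomain g x) :=
  MonoidAlgebra.coeff_injective (Finsupp.mapDomain_comp (v := x.coeff))

lemma pow_p_eq (x : MonoidAlgebra (ZMod p) G) :
    x ^ p = MonoidAlgebra.mapDomain (· ^ p) x := by
  induction x using MonoidAlgebra.induction with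
  | zero => rw [MonoidAlgebra.mapDomain_zero, zero_pow hp.out.ne_zero]
  | single_add g a f _ _ ih =>
      rw [add_pow_char, ih, MonoidAlgebra.mapDomain_add]
      congr 1
      rw [MonoidAlgebra.single_pow, ZMod.pow_card, MonoidAlgebra.mapDomain_single]

lemma pow_p_pow_eq (i : ℕ) (x : MonoidAlgebra (ZMod p) G) :
    x ^ p ^ i = MonoidAlgebra.mapDomain (· ^ p ^ i) x := by
  induction i with
  | zero =>
      simp only [pow_zero, pow_one]
      exact (MA_mapDomain_id x).symm
  | succ i ih =>
      have hc : (fun g : G => g ^ (p ^ i * p)) = (fun g : G => g ^ p) ∘ (fun g => g ^ p ^ i) := by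
        funext g; simp [pow_mul]
      rw [pow_succ, pow_mul, ih, pow_p_eq, hc, MA_mapDomain_comp]

lemma nilpotent_of_aug_zero [Fintype G] (n : ℕ) (hn : ∀ g : G, g ^ p ^ n = 1)
    (x : MonoidAlgebra (ZMod p) G) (hx : aug (ZMod p) G x = 0) : IsNilpotent x := by
  classical
  have hsum0 : (∑ g : G, x.coeff g) = 0 := by rw [← aug_apply_fintype, hx]
  have h1 : ∑ g : G, x.coeff g • (MonoidAlgebra.of (ZMod p) G g - 1)
      = ∑ g : G, x.coeff g • MonoidAlgebra.of (ZMod p) G g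
        - (∑ g : G, x.coeff g) • (1 : MonoidAlgebra (ZMod p) G) := by
    rw [Finset.sum_smul, ← Finset.sum_sub_distrib]
    exact Finset.sum_congr rfl fun g _ => smul_sub _ _ _
  have hxsum : x = ∑ g : G, x.coeff g • MonoidAlgebra.of (ZMod p) G g := by
    ext h
    rw [MonoidAlgebra.coeff_sum, Finsupp.finset_sum_apply]
    simp [MonoidAlgebra.of_apply, Finsupp.single_apply]
  have key : x = ∑ g : G, x.coeff g • (MonoidAlgebra.of (ZMod p) G g - 1) := by
    rw [h1, hsum0, zero_smul, sub_zero, ← hxsum]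
  rw [key]
  refine isNilpotent_sum fun g _ => ?_
  refine IsNilpotent.smul ?_ _
  refine ⟨p ^ n, ?_⟩
  rw [sub_pow_char_pow]
  rw [← map_pow, hn g, one_pow, map_one, sub_self]

lemma isUnit_of_aug_one [Fintype G] (n : ℕ) (hn : ∀ g : G, g ^ p ^ n = 1)
    (x : MonoidAlgebra (ZMod p) G) (hx : aug (ZMod p) G x = 1) : IsUnit x := by
  have h := (nilpotent_of_aug_zero n hn (x - 1)
    (by rw [map_sub, hx, map_one, sub_self])).isUnit_add_one
  rwa [sub_add_cancel] at h

lemma root_iff [Fintype G] (n : ℕ) (hn : ∀ g : G, g ^ p ^ n = 1) (i : ℕ)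
    (u : (MonoidAlgebra (ZMod p) G)ˣ) :
    (∃ v ∈ Vgrp (ZMod p) G, u = v ^ p ^ i) ↔
      (u ∈ Vgrp (ZMod p) G ∧
        ∀ g ∈ (u : MonoidAlgebra (ZMod p) G).coeff.support, ∃ h : G, g = h ^ p ^ i) := by
  classical
  constructor
  · rintro ⟨v, hv, rfl⟩
    refine ⟨pow_mem hv _, fun g hg => ?_⟩
    rw [Units.val_pow_eq_pow_val, pow_p_pow_eq] at hg
    obtain ⟨h, _, hh⟩ := Finset.mem_image.mp (Finsupp.mapDomain_support hg)
    exact ⟨h, hh.symm⟩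
  · rintro ⟨huV, hsupp⟩
    set q := p ^ i with hq
    have hq1 : 1 ≤ q := Nat.one_le_pow _ _ hp.out.pos
    set v : MonoidAlgebra (ZMod p) G :=
      ∑ g ∈ ((u : MonoidAlgebra (ZMod p) G).coeff.support).attach,
        MonoidAlgebra.single (hsupp g.1 g.2).choose ((u : MonoidAlgebra (ZMod p) G).coeff g.1) with hv
    have hvq : v ^ q = (u : MonoidAlgebra (ZMod p) G) := by
      rw [hq, pow_p_pow_eq, hv, ← show ∀ y, MonoidAlgebra.mapDomainLinearMap (ZMod p) (ZMod p)
          (fun g : G => g ^ p ^ i) y = MonoidAlgebra.mapDomain (fun g : G => g ^ p ^ i) y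
          from fun _ => rfl, map_sum]
      have : ∀ g ∈ ((u : MonoidAlgebra (ZMod p) G).coeff.support).attach,
          (MonoidAlgebra.mapDomainLinearMap (ZMod p) (ZMod p) (fun g : G => g ^ p ^ i))
            (MonoidAlgebra.single (hsupp g.1 g.2).choose ((u : MonoidAlgebra (ZMod p) G).coeff g.1))
          = MonoidAlgebra.single g.1 ((u : MonoidAlgebra (ZMod p) G).coeff g.1) := by
        intro g _
        rw [MonoidAlgebra.mapDomainLinearMap_single,
          ← (hsupp g.1 g.2).choose_spec]
      rw [Finset.sum_congr rfl this, Finset.sum_attach _ (fun g => MonoidAlgebra.single g ((u : MonoidAlgebra (ZMod p) G).coeff g))]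
      exact MonoidAlgebra.sum_coeff_single _
    have haugv : aug (ZMod p) G v = 1 := by
      have h2 : (aug (ZMod p) G v) ^ q = 1 := by
        rw [← map_pow, hvq, (mem_Vgrp_iff u).mp huV]
      rwa [hq, ZMod.pow_card_pow] at h2
    have hunit : v * (v ^ (q - 1) * ((u⁻¹ : (MonoidAlgebra (ZMod p) G)ˣ) : MonoidAlgebra (ZMod p) G)) = 1 := by
      rw [← mul_assoc, ← pow_succ', Nat.sub_add_cancel hq1, hvq]
      exact u.mul_inv
    refine ⟨⟨v, _, hunit, by rw [mul_comm]; exact hunit⟩, ?_, ?_⟩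
    · exact (mem_Vgrp_iff _).mpr haugv
    · exact Units.ext hvq.symm

end Aux

section Count

lemma natCard_pi_set {ι : Type*} [Fintype ι] {α : ι → Type*} (s : ∀ i, Set (α i)) :
    Nat.card ↥(Set.univ.pi s) = ∏ i, Nat.card ↥(s i) := by
  rw [← Nat.card_pi]
  exact Nat.card_congr
    ⟨fun f i => ⟨f.1 i, f.2 i (Set.mem_univ i)⟩,
     fun g => ⟨fun i => (g i).1, fun i _ => (g i).2⟩,
     fun f => rfl, fun g => rfl⟩

lemma sum_split {α : Type*} [Fintype α] [DecidableEq α] (a0 : α) {M : Type*} [AddCommMonoid M]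
    (F : α → M) : ∑ a, F a = F a0 + ∑ b : {a : α // a ≠ a0}, F b := by
  rw [← Finset.add_sum_erase Finset.univ F (Finset.mem_univ a0)]
  congr 1
  exact Finset.sum_subtype _ (fun x => by simp) F

lemma card_sum_one {p : ℕ} [hp : Fact p.Prime] {α : Type*} [Fintype α] [DecidableEq α]
    [Nonempty α] : Nat.card {f : α → ZMod p // ∑ a, f a = 1} = p ^ (Fintype.card α - 1) := by
  classical
  obtain ⟨a0⟩ := ‹Nonempty α›
  have e : {f : α → ZMod p // ∑ a, f a = 1} ≃ ({a : α // a ≠ a0} → ZMod p) := by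
    refine
      { toFun := fun f b => f.1 b.1
        invFun := fun g => ⟨fun a => if h : a = a0
            then 1 - ∑ b : {a : α // a ≠ a0}, g b else g ⟨a, h⟩, ?_⟩
        left_inv := ?_
        right_inv := ?_ }
    · rw [sum_split a0, dif_pos rfl]
      have hb : ∀ b : {a : α // a ≠ a0},
          (if h : (b : α) = a0 then 1 - ∑ c : {a : α // a ≠ a0}, g c else g ⟨b, h⟩) = g b := by
        intro b; rw [dif_neg b.2]
      rw [Finset.sum_congr rfl (fun b _ => hb b)]
      ring
    · rintro ⟨F, hF⟩
      apply Subtype.ext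
      funext a
      by_cases h : a = a0
      · subst h
        simp only [dif_pos]
        have h2 : F a + ∑ b : {x : α // x ≠ a}, F ↑b = 1 := by
          rw [← sum_split a F]; exact hF
        rw [← h2]; ring
      · simp only [dif_neg h]
    · intro g; funext b
      simp only [dif_neg b.2]
  rw [Nat.card_congr e, Nat.card_fun, Nat.card_eq_fintype_card, Nat.card_eq_fintype_card,
    ZMod.card, Fintype.card_subtype_compl, Fintype.card_subtype_eq]

lemma sum_subtype_of_vanish {α : Type*} [Fintype α] (P : α → Prop) [DecidablePred P]
    {M : Type*} [AddCommMonoid M] (F : α → M) (h : ∀ a, ¬ P a → F a = 0) :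
    ∑ a, F a = ∑ b : {a : α // P a}, F b := by
  classical
  rw [← Finset.sum_filter_add_sum_filter_not Finset.univ P F,
    Finset.sum_eq_zero (fun a ha => h a (Finset.mem_filter.mp ha).2), add_zero]
  exact Finset.sum_subtype _ (fun x => by simp) F

lemma card_support_sum {p : ℕ} [hp : Fact p.Prime] {α : Type*} [Fintype α] [DecidableEq α]
    (P : α → Prop) [DecidablePred P] (h0 : ∃ a, P a) :
    Nat.card {F : α → ZMod p // ∑ a, F a = 1 ∧ ∀ a, F a ≠ 0 → P a}
      = p ^ (Fintype.card {a : α // P a} - 1) := by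
  classical
  haveI : Nonempty {a : α // P a} := ⟨⟨h0.choose, h0.choose_spec⟩⟩
  rw [← card_sum_one (p := p) (α := {a : α // P a})]
  refine Nat.card_congr ?_
  refine
    { toFun := fun F => ⟨fun b => F.1 b.1, ?_⟩
      invFun := fun g => ⟨fun a => if h : P a then g.1 ⟨a, h⟩ else 0, ?_, ?_⟩
      left_inv := ?_
      right_inv := ?_ }
  · rw [← sum_subtype_of_vanish P F.1 (fun a ha => by
      by_contra hne; exact ha (F.2.2 a hne))]
    exact F.2.1
  · have : ∑ a : α, (if h : P a then g.1 ⟨a, h⟩ else 0) = ∑ b : {a : α // P a}, g.1 b := by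
      rw [sum_subtype_of_vanish P _ (fun a ha => dif_neg ha)]
      exact Finset.sum_congr rfl fun b _ => by rw [dif_pos b.2]
    rw [this]; exact g.2
  · intro a ha
    by_contra hP
    exact ha (dif_neg hP)
  · rintro ⟨F, hF1, hF2⟩
    apply Subtype.ext
    funext a
    by_cases h : P a
    · simp only [dif_pos h]
    · simp only [dif_neg h]
      by_contra hne
      exact h (hF2 a (fun h0 => hne h0.symm))
  · intro g
    apply Subtype.ext
    funext b
    simp only [dif_pos b.2]

end Count

section Count2

variable {p : ℕ} [hp : Fact p.Prime]

lemma card_T {G : Type*} [CommGroup G] [Fintype G] [DecidableEq G] (H : Subgroup G)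
    [DecidablePred (· ∈ H)] :
    Nat.card {x : MonoidAlgebra (ZMod p) G // aug (ZMod p) G x = 1 ∧ ∀ g ∈ x.coeff.support, g ∈ H}
      = p ^ (Nat.card H - 1) := by
  have e1 : {x : MonoidAlgebra (ZMod p) G // aug (ZMod p) G x = 1 ∧ ∀ g ∈ x.coeff.support, g ∈ H}
      ≃ {F : G → ZMod p // ∑ a, F a = 1 ∧ ∀ a, F a ≠ 0 → a ∈ H} :=
    Equiv.subtypeEquiv (MonoidAlgebra.coeffEquiv.trans Finsupp.equivFunOnFinite) (fun x => by
      simp only [Equiv.trans_apply, MonoidAlgebra.coeffEquiv_apply, Finsupp.equivFunOnFinite_apply, aug_apply_fintype, Finsupp.mem_support_iff])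
  rw [Nat.card_congr e1, card_support_sum (· ∈ H) ⟨1, H.one_mem⟩, Nat.card_eq_fintype_card]

lemma card_powRange {G : Type*} [CommGroup G] [Fintype G] (n : ℕ)
    (hn : ∀ g : G, g ^ p ^ n = 1) (i : ℕ) :
    Nat.card ((powMonoidHom (p ^ i) : Vgrp (ZMod p) G →* Vgrp (ZMod p) G).range)
      = p ^ (Nat.card ((powMonoidHom (p ^ i) : G →* G).range) - 1) := by
  classical
  rw [← card_T (p := p) ((powMonoidHom (p ^ i) : G →* G).range)]
  set H := ((powMonoidHom (p ^ i) : G →* G).range) with hH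
  refine Nat.card_congr (Equiv.ofBijective
    (fun w => ⟨((w.1 : (MonoidAlgebra (ZMod p) G)ˣ) : MonoidAlgebra (ZMod p) G), ?_⟩) ⟨?_, ?_⟩)
  · obtain ⟨v, hv⟩ := w.2
    have huveq : (w.1 : (MonoidAlgebra (ZMod p) G)ˣ)
        = ((v : (MonoidAlgebra (ZMod p) G)ˣ)) ^ p ^ i := by
      have := congrArg (Subtype.val) hv
      simpa using this.symm
    have hr := (root_iff n hn i (w.1 : (MonoidAlgebra (ZMod p) G)ˣ)).mp
      ⟨(v : (MonoidAlgebra (ZMod p) G)ˣ), v.2, huveq⟩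
    refine ⟨(mem_Vgrp_iff _).mp hr.1, fun g hg => ?_⟩
    obtain ⟨h, hh⟩ := hr.2 g hg
    exact ⟨h, hh.symm⟩
  · intro w1 w2 h
    exact Subtype.ext (Subtype.ext (Units.ext (congrArg Subtype.val h)))
  · rintro ⟨x, hx1, hx2⟩
    obtain ⟨u, hu⟩ := isUnit_of_aug_one n hn x hx1
    have humem : u ∈ Vgrp (ZMod p) G := (mem_Vgrp_iff u).mpr (by rw [hu, hx1])
    have hroot := (root_iff n hn i u).mpr ⟨humem, fun g hg => by
      obtain ⟨h, hh⟩ := hx2 g (by rwa [hu] at hg)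
      exact ⟨h, hh.symm⟩⟩
    obtain ⟨v, hvV, hvq⟩ := hroot
    refine ⟨⟨⟨u, humem⟩, ⟨⟨v, hvV⟩, ?_⟩⟩, ?_⟩
    · exact Subtype.ext hvq.symm
    · exact Subtype.ext hu

lemma card_range_subgroup {M : Type*} [CommGroup M] (q : ℕ) :
    Nat.card ((powMonoidHom q : M →* M).range)
      = Nat.card (Set.range fun m : M => m ^ q) :=
  Nat.card_congr (Equiv.setCongr (by rw [MonoidHom.coe_range]; rfl))

lemma card_powRange_congr {M N : Type*} [CommGroup M] [CommGroup N] (e : M ≃* N) (q : ℕ) :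
    Nat.card ((powMonoidHom q : M →* M).range)
      = Nat.card ((powMonoidHom q : N →* N).range) := by
  rw [card_range_subgroup, card_range_subgroup]
  have h : (e : M → N) '' (Set.range fun m : M => m ^ q) = Set.range fun n : N => n ^ q := by
    ext y
    constructor
    · rintro ⟨_, ⟨m, rfl⟩, rfl⟩
      exact ⟨e m, (map_pow e m q).symm⟩
    · rintro ⟨n, rfl⟩
      exact ⟨(e.symm n) ^ q, ⟨e.symm n, rfl⟩, by rw [map_pow]; simp⟩
  rw [← h, Nat.card_image_of_injective e.injective]

lemma card_pow_range_pi {ι : Type*} [Fintype ι] {B : ι → Type*} [∀ i, Group (B i)] (q : ℕ) :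
    Nat.card (Set.range fun a : (∀ i, B i) => a ^ q)
      = ∏ i, Nat.card (Set.range fun b : B i => b ^ q) := by
  have h : (fun a : (∀ i, B i) => a ^ q) = Pi.map (fun i (b : B i) => b ^ q) := by
    funext a; funext i; rfl
  rw [h, Set.range_piMap]
  exact natCard_pi_set _

lemma card_pow_range_zmod (i j : ℕ) :
    Nat.card (Set.range fun x : Multiplicative (ZMod (p ^ j)) => x ^ p ^ i)
      = p ^ (j - i) := by
  haveI : NeZero (p ^ j) := ⟨pow_ne_zero _ hp.out.ne_zero⟩
  have h1 : (Set.range fun x : Multiplicative (ZMod (p ^ j)) => x ^ p ^ i)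
      = (Multiplicative.ofAdd) '' (Set.range fun z : ZMod (p ^ j) => (p ^ i) • z) := by
    ext y
    constructor
    · rintro ⟨x, rfl⟩
      exact ⟨(p ^ i) • x.toAdd, ⟨x.toAdd, rfl⟩, rfl⟩
    · rintro ⟨_, ⟨z, rfl⟩, rfl⟩
      exact ⟨Multiplicative.ofAdd z, rfl⟩
  have h2 : (Set.range fun z : ZMod (p ^ j) => (p ^ i) • z)
      = ((AddSubgroup.zmultiples (((p : ℕ) ^ i : ℕ) : ZMod (p ^ j))) : Set (ZMod (p ^ j))) := by
    ext w
    constructor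
    · rintro ⟨z, rfl⟩
      refine AddSubgroup.mem_zmultiples_iff.mpr ⟨(z.val : ℤ), ?_⟩
      simp only [zsmul_eq_mul, nsmul_eq_mul]
      push_cast
      rw [ZMod.natCast_val, ZMod.cast_id, mul_comm]
    · intro hw
      obtain ⟨k, hk⟩ := AddSubgroup.mem_zmultiples_iff.mp hw
      refine ⟨(k : ZMod (p ^ j)), ?_⟩
      rw [← hk]
      simp only [zsmul_eq_mul, nsmul_eq_mul]
      push_cast
      rw [mul_comm]
  rw [h1, Nat.card_image_of_injective Multiplicative.ofAdd.injective, h2]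
  have h3 : Nat.card ((AddSubgroup.zmultiples (((p : ℕ) ^ i : ℕ) : ZMod (p ^ j))) : Set (ZMod (p ^ j)))
      = Nat.card (AddSubgroup.zmultiples (((p : ℕ) ^ i : ℕ) : ZMod (p ^ j))) := rfl
  rw [h3, Nat.card_zmultiples, ZMod.addOrderOf_coe _ (pow_ne_zero j hp.out.ne_zero)]
  rcases le_total i j with h | h
  · rw [Nat.gcd_eq_right (pow_dvd_pow p h), Nat.pow_div h hp.out.pos]
  · rw [Nat.gcd_eq_left (pow_dvd_pow p h), Nat.div_self (pow_pos hp.out.pos j),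
      Nat.sub_eq_zero_of_le h, pow_zero]

end Count2

/-- `V(Z_p G)^p = V(Z_p G^p)`: the `p`-th powers of normalized units are exactly
the normalized units supported on `G^p`; consequently, in any decomposition of
`V(Z_p G)` into cyclic factors, the number of factors of order `p^i` is
`|G^{p^{i-1}}| - 2|G^{p^i}| + |G^{p^{i+1}}|`. -/
theorem stmt_17 (p : ℕ) (hp : p.Prime)
    (G : Type*) [CommGroup G] [Fintype G] (hG : IsPGroup p G) :
    (∀ u : (MonoidAlgebra (ZMod p) G)ˣ,
        (∃ v ∈ Vgrp (ZMod p) G, u = v ^ p) ↔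
          (u ∈ Vgrp (ZMod p) G ∧
            ∀ g ∈ (u : MonoidAlgebra (ZMod p) G).coeff.support, ∃ h : G, g = h ^ p)) ∧
      (∀ (N : ℕ) (n : ℕ → ℕ),
        Nonempty ((Vgrp (ZMod p) G) ≃*
            ((j : Fin (N + 1)) → Fin (n j) → Multiplicative (ZMod (p ^ (j : ℕ))))) →
          ∀ i : ℕ, 1 ≤ i → i ≤ N →
            n i + 2 * Nat.card ((powMonoidHom (p ^ i) : G →* G).range) =
              Nat.card ((powMonoidHom (p ^ (i - 1)) : G →* G).range) +
                Nat.card ((powMonoidHom (p ^ (i + 1)) : G →* G).range)) := by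
  haveI := Fact.mk hp
  classical
  obtain ⟨m, hm⟩ := IsPGroup.iff_card.mp hG
  have hn : ∀ g : G, g ^ p ^ m = 1 := fun g => by
    rw [← hm]; exact pow_card_eq_one'
  constructor
  · intro u
    have h := root_iff m hn 1 u
    simpa [pow_one] using h
  · intro N n he i hi1 hiN
    obtain ⟨e⟩ := he
    have hcard : ∀ k : ℕ, Nat.card ((powMonoidHom (p ^ k) : G →* G).range)
        = (∑ j : Fin (N + 1), ((j : ℕ) - k) * n j) + 1 := by
      intro k
      have h1 := card_powRange (p := p) m hn k
      have h2 : Nat.card ((powMonoidHom (p ^ k) :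
            Vgrp (ZMod p) G →* Vgrp (ZMod p) G).range)
          = p ^ (∑ j : Fin (N + 1), ((j : ℕ) - k) * n j) := by
        rw [card_powRange_congr e (p ^ k), card_range_subgroup, card_pow_range_pi]
        have hj : ∀ j : Fin (N + 1),
            Nat.card (Set.range fun b : Fin (n j) → Multiplicative (ZMod (p ^ (j : ℕ))) =>
              b ^ p ^ k) = (p ^ ((j : ℕ) - k)) ^ (n j) := by
          intro j
          rw [card_pow_range_pi]
          have := card_pow_range_zmod (p := p) k (j : ℕ)
          rw [Finset.prod_congr rfl (fun _ _ => this), Finset.prod_const, Finset.card_univ,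
            Fintype.card_fin]
        rw [Finset.prod_congr rfl (fun j _ => hj j)]
        simp_rw [← pow_mul]
        rw [Finset.prod_pow_eq_pow_sum]
      have h3 : p ^ (Nat.card ((powMonoidHom (p ^ k) : G →* G).range) - 1)
          = p ^ (∑ j : Fin (N + 1), ((j : ℕ) - k) * n j) := by rw [← h1, h2]
      have h4 := Nat.pow_right_injective hp.two_le h3
      have hpos : 0 < Nat.card ((powMonoidHom (p ^ k) : G →* G).range) := Nat.card_pos
      omega
    rw [hcard i, hcard (i - 1), hcard (i + 1)]
    have key : (∑ j : Fin (N + 1), ((j : ℕ) - (i - 1)) * n j)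
        + (∑ j : Fin (N + 1), ((j : ℕ) - (i + 1)) * n j)
        = 2 * (∑ j : Fin (N + 1), ((j : ℕ) - i) * n j) + n i := by
      have hterm : ∀ j : Fin (N + 1), ((j : ℕ) - (i - 1)) * n j + ((j : ℕ) - (i + 1)) * n j
          = 2 * (((j : ℕ) - i) * n j) + (if (j : ℕ) = i then n (j : ℕ) else 0) := by
        intro j
        by_cases hji : (j : ℕ) = i
        · rw [if_pos hji, hji,
            show i - (i - 1) = 1 from by omega,
            show i - (i + 1) = 0 from by omega,
            Nat.sub_self]
          ring
        · rw [if_neg hji, add_zero, ← add_mul,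
            show (j : ℕ) - (i - 1) + ((j : ℕ) - (i + 1)) = 2 * ((j : ℕ) - i) from by omega,
            mul_assoc]
      rw [← Finset.sum_add_distrib, Finset.sum_congr rfl (fun j _ => hterm j),
        Finset.sum_add_distrib, ← Finset.mul_sum]
      congr 1
      have hcond : ∀ j : Fin (N + 1), (if (j : ℕ) = i then n (j : ℕ) else 0)
          = (if j = (⟨i, by omega⟩ : Fin (N + 1)) then n (j : ℕ) else 0) := by
        intro j
        congr 1
        simp [Fin.ext_iff]
      rw [Finset.sum_congr rfl (fun j _ => hcond j), Finset.sum_ite_eq', if_pos (Finset.mem_univ _)]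
    omega
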